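/- Under the standing setup, if D(A_2) = D(A) + α_1·D(A_{1,2}), then |A_{H_1∩H_2}| > 2; that is, there exists a hyperplane H ∈ A distinct from H_1 and H_2 whose defining form lies in the K-linear span of α_1 and α_2. -/

import Mathlib

set_option maxHeartbeats 1000000
set_option synthInstance.maxHeartbeats 1000000

universe u

namespace ArrPaper

/-- The polynomial ring `S = K[x_1, …, x_ℓ]`. -/
abbrev S (K : Type u) [Field K] (ℓ : ℕ) : Type u := MvPolynomial (Fin ℓ) K

/-- Derivations of `S`, identified with their coefficient vectors:
`θ = Σ f_i ∂_{x_i}` corresponds to `(f_1, …, f_ℓ)`. -/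
abbrev Der (K : Type u) [Field K] (ℓ : ℕ) : Type u := Fin ℓ → MvPolynomial (Fin ℓ) K

variable {K : Type u} [Field K] {ℓ : ℕ}

/-- Application of the derivation `θ = Σ θ_i ∂_{x_i}` to a polynomial, as a linear map in `θ`. -/
noncomputable def derAppLin (α : S K ℓ) : Der K ℓ →ₗ[S K ℓ] S K ℓ where
  toFun θ := ∑ i, θ i * MvPolynomial.pderiv i α
  map_add' a b := by simp [add_mul, Finset.sum_add_distrib]
  map_smul' c a := by simp [Finset.mul_sum, smul_eq_mul, mul_assoc]

/-- The logarithmic derivation module `D(A)` of a (multi)set of defining forms. -/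
noncomputable def logDeriv (A : Finset (S K ℓ)) : Submodule (S K ℓ) (Der K ℓ) :=
  ⨅ α ∈ A, Submodule.comap (derAppLin α) (Ideal.span {α})

/-- A derivation is homogeneous of degree `d` if all its coefficients are. -/
def IsHomDer (θ : Der K ℓ) (d : ℕ) : Prop := ∀ i, (θ i).IsHomogeneous d

/-- A central arrangement: a finite set of nonzero degree-one forms, pairwise
non-proportional (so that they define distinct hyperplanes). -/
def IsArrangement (A : Finset (S K ℓ)) : Prop :=
  (∀ α ∈ A, α ≠ 0 ∧ α.IsHomogeneous 1) ∧
    ∀ α ∈ A, ∀ β ∈ A, α ≠ β → ∀ c : K, α ≠ c • β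

/-- `θ` is a homogeneous basis of the submodule `M ⊆ Der`, of degrees `d`. -/
def IsHomBasis {n : ℕ} (θ : Fin n → Der K ℓ) (d : Fin n → ℕ)
    (M : Submodule (S K ℓ) (Der K ℓ)) : Prop :=
  (∀ i, IsHomDer (θ i) (d i)) ∧ LinearIndependent (S K ℓ) θ ∧
    Submodule.span (S K ℓ) (Set.range θ) = M

/-- The arrangement `A` is free with exponents `d`. -/
def IsFreeExp (A : Finset (S K ℓ)) (d : Fin ℓ → ℕ) : Prop :=
  ∃ θ : Fin ℓ → Der K ℓ, IsHomBasis θ d (logDeriv A)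

/-- `T` is a minimal generating set of `M`: it generates, and no proper subset does. -/
def IsMinGenSet (T : Set (Der K ℓ)) (M : Submodule (S K ℓ) (Der K ℓ)) : Prop :=
  Submodule.span (S K ℓ) T = M ∧ ∀ T' ⊂ T, Submodule.span (S K ℓ) T' ≠ M

/-- `B` is strictly plus-one generated (SPOG) with exponents `d` and level `c`. -/
def IsSPOG (B : Finset (S K ℓ)) (d : Fin ℓ → ℕ) (c : ℕ) : Prop :=
  ∃ (θ : Fin ℓ → Der K ℓ) (φ : Der K ℓ) (f : Fin ℓ → S K ℓ) (α : S K ℓ),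
    (∀ i, IsHomDer (θ i) (d i)) ∧ IsHomDer φ c ∧
    IsMinGenSet (Set.range θ ∪ {φ}) (logDeriv B) ∧
    α ≠ 0 ∧ α.IsHomogeneous 1 ∧
    (∑ i, f i • θ i) + α • φ = 0 ∧
    (∀ (g : Fin ℓ → S K ℓ) (g₀ : S K ℓ), (∑ i, g i • θ i) + g₀ • φ = 0 →
      ∃ s : S K ℓ, (∀ i, g i = s * f i) ∧ g₀ = s * α)

/-- `ψ` is a level element for the deletion `B = A ∖ {H}` (of degree `c`):
`ψ ∈ D(B) ∖ D(A)` is homogeneous of degree `c` and `D(B) = D(A) + S·ψ`. -/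
def IsLevelElt (A B : Finset (S K ℓ)) (c : ℕ) (ψ : Der K ℓ) : Prop :=
  ψ ∈ logDeriv B ∧ ψ ∉ logDeriv A ∧ IsHomDer ψ c ∧
    logDeriv B = logDeriv A ⊔ Submodule.span (S K ℓ) {ψ}

/-- `α·M = {α·θ : θ ∈ M}` for a polynomial `α` and a submodule `M` of `Der`. -/
noncomputable def smulSub (α : S K ℓ) (M : Submodule (S K ℓ) (Der K ℓ)) :
    Submodule (S K ℓ) (Der K ℓ) :=
  Submodule.map (LinearMap.lsmul (S K ℓ) (Der K ℓ) α) M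

/-- The number `|A_{H₁ ∩ H₂}|` of hyperplanes of `A` whose defining form lies in the
`K`-linear span of `α₁` and `α₂`. -/
noncomputable def interCount (A : Finset (S K ℓ)) (α₁ α₂ : S K ℓ) : ℕ :=
  {β ∈ (A : Set (S K ℓ)) | β ∈ Submodule.span K {α₁, α₂}}.ncard

/-- `D(B)` can be generated by at most `n` homogeneous derivations. -/
def HomGenBound (B : Finset (S K ℓ)) (n : ℕ) : Prop :=
  ∃ T : Finset (Der K ℓ), T.card ≤ n ∧ (∀ θ ∈ T, ∃ e, IsHomDer θ e) ∧
    Submodule.span (S K ℓ) (T : Set (Der K ℓ)) = logDeriv B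

/-- `|DS(B)| = n`: `D(B)` has a minimal homogeneous generating set of cardinality `n`. -/
def DSCard (B : Finset (S K ℓ)) (n : ℕ) : Prop :=
  ∃ T : Finset (Der K ℓ), T.card = n ∧ (∀ θ ∈ T, ∃ e, IsHomDer θ e) ∧
    IsMinGenSet (T : Set (Der K ℓ)) (logDeriv B)

/-- `pdLE R n M` : the projective dimension of the `R`-module `M` is at most `n`,
expressed via projectivity of the `n`-th syzygy in the canonical free resolution. -/
def pdLE (R : Type u) [CommRing R] : ℕ → (M : Type u) → [AddCommGroup M] → [Module R M] → Prop
  | 0, M, _, _ => Module.Projective R M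
  | n + 1, M, _, _ =>
      pdLE R n ↥(LinearMap.ker (Finsupp.linearCombination R (_root_.id : M → M)))



/-! ### Auxiliary lemmas -/

open MvPolynomial in
lemma aux_degree_one_exists {σ : Type*} [DecidableEq σ] {d : σ →₀ ℕ}
    (h : Finsupp.degree d = 1) : ∃ i, d = Finsupp.single i 1 := by
  have hs : d.support.Nonempty := by
    by_contra hne
    rw [Finset.not_nonempty_iff_eq_empty] at hne
    have h0 : Finsupp.degree d = 0 := by
      rw [Finsupp.degree_apply, hne]; simp
    omega
  obtain ⟨j, hj⟩ := hs
  refine ⟨j, ?_⟩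
  have hdj : d j = 1 := by
    have h1 : 1 ≤ d j := Nat.one_le_iff_ne_zero.2 (Finsupp.mem_support_iff.1 hj)
    have h2 := Finsupp.le_degree j d
    omega
  rw [Finsupp.eq_single_iff]
  refine ⟨?_, hdj⟩
  intro k hk
  simp only [Finset.mem_singleton]
  by_contra hkj
  have hdk : 1 ≤ d k := Nat.one_le_iff_ne_zero.2 (Finsupp.mem_support_iff.1 hk)
  have hsub : ({j, k} : Finset σ) ⊆ d.support := by
    intro x hx
    rcases Finset.mem_insert.1 hx with rfl | hx
    · exact hj
    · rwa [Finset.mem_singleton.1 hx]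
  have hle : ∑ x ∈ ({j, k} : Finset σ), d x ≤ ∑ x ∈ d.support, d x :=
    Finset.sum_le_sum_of_subset hsub
  rw [Finset.sum_pair (fun h => hkj h.symm)] at hle
  have : Finsupp.degree d = ∑ x ∈ d.support, d x := rfl
  omega

open MvPolynomial in
lemma aux_hom1_eq_sum {K : Type u} [Field K] {ℓ : ℕ} (β : S K ℓ)
    (hβ : β.IsHomogeneous 1) :
    β = ∑ i, C (coeff (Finsupp.single i 1) β) * X i := by
  apply MvPolynomial.ext
  intro m
  rw [MvPolynomial.coeff_sum]
  simp only [coeff_C_mul, coeff_X']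
  by_cases hm : ∃ j, m = Finsupp.single j 1
  · obtain ⟨j, rfl⟩ := hm
    rw [Finset.sum_eq_single j]
    · rw [if_pos rfl, mul_one]
    · intro i _ hij
      rw [if_neg, mul_zero]
      intro he
      exact hij ((Finsupp.single_left_inj one_ne_zero).1 he)
    · intro h; exact absurd (Finset.mem_univ j) h
  · have h0 : coeff m β = 0 := by
      apply hβ.coeff_eq_zero
      intro hdeg
      exact hm (aux_degree_one_exists hdeg)
    rw [h0]
    refine (Finset.sum_eq_zero ?_).symm
    intro i _
    rw [if_neg, mul_zero]
    intro he
    exact hm ⟨i, he.symm⟩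

open MvPolynomial in
lemma aux_pderiv_hom1 {K : Type u} [Field K] {ℓ : ℕ} (β : S K ℓ)
    (hβ : β.IsHomogeneous 1) (i : Fin ℓ) :
    pderiv i β = C (coeff (Finsupp.single i 1) β) := by
  conv_lhs => rw [aux_hom1_eq_sum β hβ]
  rw [map_sum]
  rw [Finset.sum_eq_single i]
  · rw [pderiv_C_mul, pderiv_X_self, mul_one]
  · intro j _ hji
    rw [pderiv_C_mul, pderiv_X_of_ne hji, mul_zero]
  · intro h; exact absurd (Finset.mem_univ i) h

lemma aux_derAppLin_apply {K : Type u} [Field K] {ℓ : ℕ} (α : S K ℓ) (θ : Der K ℓ) :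
    derAppLin α θ = ∑ i, θ i * MvPolynomial.pderiv i α := rfl

lemma aux_mem_logDeriv {K : Type u} [Field K] {ℓ : ℕ} {A : Finset (S K ℓ)} {θ : Der K ℓ} :
    θ ∈ logDeriv A ↔ ∀ β ∈ A, derAppLin β θ ∈ Ideal.span ({β} : Set (S K ℓ)) := by
  simp [logDeriv, Submodule.mem_iInf]

open MvPolynomial in
lemma aux_g_sum {K : Type u} [Field K] {ℓ : ℕ} (g : (Fin ℓ → K) →ₗ[K] K)
    (b : Fin ℓ → K) : ∑ i, g (Pi.single i 1) * b i = g b := by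
  have h1 : ∀ i : Fin ℓ, g (Pi.single i 1) * b i = g (Pi.single i (b i)) := by
    intro i
    have h2 : (Pi.single i (b i) : Fin ℓ → K) = b i • (Pi.single i 1 : Fin ℓ → K) := by
      ext j
      rcases eq_or_ne j i with rfl | h
      · simp
      · simp [Pi.single_eq_of_ne h]
    rw [h2, map_smul, smul_eq_mul, mul_comm]
  simp_rw [h1]
  rw [← map_sum, Finset.univ_sum_single]

/-- If `D(A₂) = D(A) + α₁·D(A₁₂)`, then `|A_{H₁∩H₂}| > 2`; i.e. some hyperplane
of `A` distinct from `H₁, H₂` has defining form in the `K`-span of `α₁, α₂`. -/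
theorem stmt6 {K : Type u} [Field K] {ℓ : ℕ} [DecidableEq (S K ℓ)] (hℓ : 0 < ℓ)
    (A : Finset (S K ℓ)) (hA : IsArrangement A)
    (α₁ α₂ : S K ℓ) (h₁ : α₁ ∈ A) (h₂ : α₂ ∈ A) (hne : α₁ ≠ α₂)
    (d : Fin ℓ → ℕ) (hd1 : d ⟨0, hℓ⟩ = 1) (hfree : IsFreeExp A d)
    (c₁ c₂ : ℕ) (hc : c₁ ≤ c₂)
    (hS1 : IsSPOG (A.erase α₁) d c₁) (hS2 : IsSPOG (A.erase α₂) d c₂)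
    (heq : logDeriv (A.erase α₂) =
      logDeriv A ⊔ smulSub α₁ (logDeriv ((A.erase α₁).erase α₂))) :
    2 < interCount A α₁ α₂ ∧
      ∃ β ∈ A, β ≠ α₁ ∧ β ≠ α₂ ∧ β ∈ Submodule.span K {α₁, α₂} := by
  classical
  obtain ⟨hA1, hA2'⟩ := hA
  have hα₁h : α₁.IsHomogeneous 1 := (hA1 α₁ h₁).2
  have hα₂h : α₂.IsHomogeneous 1 := (hA1 α₂ h₂).2
  set a₁ : Fin ℓ → K := fun i => MvPolynomial.coeff (Finsupp.single i 1) α₁ with ha₁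
  set a₂ : Fin ℓ → K := fun i => MvPolynomial.coeff (Finsupp.single i 1) α₂ with ha₂
  -- `a₂` is not a multiple of `a₁`
  have hnspan : a₂ ∉ Submodule.span K {a₁} := by
    intro hmem
    rw [Submodule.mem_span_singleton] at hmem
    obtain ⟨c, hc⟩ := hmem
    have heq2 : α₂ = c • α₁ := by
      apply MvPolynomial.ext
      intro m
      rw [MvPolynomial.coeff_smul]
      by_cases hdeg : Finsupp.degree m = 1
      · obtain ⟨j, rfl⟩ := aux_degree_one_exists hdeg
        have hcj : c * a₁ j = a₂ j := by rw [← hc]; rfl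
        simpa [ha₁, ha₂, smul_eq_mul] using hcj.symm
      · rw [hα₂h.coeff_eq_zero hdeg, hα₁h.coeff_eq_zero hdeg, smul_zero]
    exact hA2' α₂ h₂ α₁ h₁ hne.symm c heq2
  -- a linear functional `g` with `g a₁ = 0`, `g a₂ ≠ 0`
  obtain ⟨q', hq'⟩ := (Submodule.span K {a₁}).exists_isCompl
  set pr : (Fin ℓ → K) →ₗ[K] q' :=
    Submodule.projectionOnto q' (Submodule.span K {a₁}) hq'.symm with hpr
  have hpra1 : pr a₁ = 0 :=
    Submodule.projectionOnto_apply_of_mem_right hq'.symm (Submodule.mem_span_singleton_self a₁)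
  have hpra2 : (pr a₂ : Fin ℓ → K) ≠ 0 := by
    intro h0
    apply hnspan
    have hker : a₂ ∈ LinearMap.ker pr := LinearMap.mem_ker.2 (Subtype.ext (by simpa using h0))
    rwa [Submodule.ker_projectionOnto] at hker
  obtain ⟨j, hj⟩ : ∃ j, (pr a₂ : Fin ℓ → K) j ≠ 0 := by
    by_contra hcon
    push_neg at hcon
    exact hpra2 (funext hcon)
  set g : (Fin ℓ → K) →ₗ[K] K := (LinearMap.proj j) ∘ₗ (q'.subtype ∘ₗ pr) with hg
  have hga1 : g a₁ = 0 := by simp [hg, hpra1]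
  have hga2 : g a₂ ≠ 0 := by simpa [hg] using hj
  set v : Fin ℓ → K := fun i => (g a₂)⁻¹ * g (Pi.single i 1) with hv
  have hvsum : ∀ β : S K ℓ, (∑ i, v i * MvPolynomial.coeff (Finsupp.single i 1) β)
      = (g a₂)⁻¹ * g (fun i => MvPolynomial.coeff (Finsupp.single i 1) β) := by
    intro β
    rw [← aux_g_sum g (fun i => MvPolynomial.coeff (Finsupp.single i 1) β), Finset.mul_sum]
    apply Finset.sum_congr rfl
    intro i _
    rw [hv]
    ring
  -- the derivation θ = Q ∂_v
  set Q : S K ℓ := ∏ β ∈ ((A.erase α₁).erase α₂), β with hQ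
  set θ : Der K ℓ := fun i => Q * MvPolynomial.C (v i) with hθ
  have happ : ∀ β : S K ℓ, β.IsHomogeneous 1 →
      derAppLin β θ =
        Q * MvPolynomial.C (∑ i, v i * MvPolynomial.coeff (Finsupp.single i 1) β) := by
    intro β hβ
    rw [aux_derAppLin_apply]
    calc ∑ i, θ i * MvPolynomial.pderiv i β
        = ∑ i, Q * MvPolynomial.C (v i * MvPolynomial.coeff (Finsupp.single i 1) β) := by
          apply Finset.sum_congr rfl
          intro i _
          rw [aux_pderiv_hom1 β hβ i, hθ, map_mul]
          ring
      _ = Q * ∑ i, MvPolynomial.C (v i * MvPolynomial.coeff (Finsupp.single i 1) β) := by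
          rw [Finset.mul_sum]
      _ = Q * MvPolynomial.C (∑ i, v i * MvPolynomial.coeff (Finsupp.single i 1) β) := by
          rw [map_sum]
  have hθmem : θ ∈ logDeriv (A.erase α₂) := by
    rw [aux_mem_logDeriv]
    intro β hβmem
    have hβA : β ∈ A := Finset.mem_of_mem_erase hβmem
    have hβh : β.IsHomogeneous 1 := (hA1 β hβA).2
    rw [happ β hβh]
    rcases eq_or_ne β α₁ with rfl | hβα₁
    · rw [hvsum, ← ha₁, hga1, mul_zero, map_zero, mul_zero]
      exact zero_mem _
    · have hβ12 : β ∈ (A.erase α₁).erase α₂ := by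
        rw [Finset.mem_erase] at hβmem ⊢
        exact ⟨hβmem.1, Finset.mem_erase.2 ⟨hβα₁, hβA⟩⟩
      rw [Ideal.mem_span_singleton]
      exact dvd_mul_of_dvd_left (Finset.dvd_prod_of_mem _ hβ12) _
  -- use the hypothesis heq
  rw [heq] at hθmem
  obtain ⟨η, hη, ξ, hξ, hsum⟩ := Submodule.mem_sup.1 hθmem
  obtain ⟨τ, hτ, hξeq⟩ := Submodule.mem_map.1 hξ
  have happ2 : derAppLin α₂ θ = derAppLin α₂ η + α₁ * derAppLin α₂ τ := by
    rw [← hsum, map_add]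
    congr 1
    rw [← hξeq]
    have : (LinearMap.lsmul (S K ℓ) (Der K ℓ) α₁) τ = α₁ • τ := rfl
    rw [this, map_smul, smul_eq_mul]
  have hηmem : derAppLin α₂ η ∈ Ideal.span ({α₂} : Set (S K ℓ)) :=
    (aux_mem_logDeriv.1 hη) α₂ h₂
  obtain ⟨s, hs⟩ := Ideal.mem_span_singleton'.1 hηmem
  have hQval : derAppLin α₂ θ = Q := by
    rw [happ α₂ hα₂h, hvsum, ← ha₂, inv_mul_cancel₀ hga2, map_one, mul_one]
  have hQmem : Q = s * α₂ + α₁ * derAppLin α₂ τ := by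
    rw [← hQval, happ2, hs]
  -- the projection T and the substitution φ
  obtain ⟨w, hw⟩ := (Submodule.span K ({α₁, α₂} : Set (S K ℓ))).exists_isCompl
  set prT : S K ℓ →ₗ[K] w :=
    Submodule.projectionOnto w (Submodule.span K ({α₁, α₂} : Set (S K ℓ))) hw.symm with hprT
  set T : S K ℓ →ₗ[K] S K ℓ := w.subtype ∘ₗ prT with hT
  have hTzero : ∀ x, x ∈ Submodule.span K ({α₁, α₂} : Set (S K ℓ)) → T x = 0 := by
    intro x hx
    simp [hT, hprT, Submodule.projectionOnto_apply_of_mem_right hw.symm hx]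
  have hTker : ∀ x, T x = 0 → x ∈ Submodule.span K ({α₁, α₂} : Set (S K ℓ)) := by
    intro x hx
    have h0 : prT x = 0 := Subtype.ext (by simpa [hT] using hx)
    have hk : x ∈ LinearMap.ker prT := LinearMap.mem_ker.2 h0
    rwa [hprT, Submodule.ker_projectionOnto] at hk
  set φ : S K ℓ →ₐ[K] S K ℓ := MvPolynomial.aeval (fun i => T (MvPolynomial.X i)) with hφ
  have hφhom1 : ∀ β : S K ℓ, β.IsHomogeneous 1 → φ β = T β := by
    intro β hβ
    conv_lhs => rw [aux_hom1_eq_sum β hβ]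
    conv_rhs => rw [aux_hom1_eq_sum β hβ]
    rw [map_sum, map_sum]
    apply Finset.sum_congr rfl
    intro i _
    have h1 : φ (MvPolynomial.C (MvPolynomial.coeff (Finsupp.single i 1) β) * MvPolynomial.X i)
        = MvPolynomial.C (MvPolynomial.coeff (Finsupp.single i 1) β) * T (MvPolynomial.X i) := by
      rw [map_mul, hφ]
      simp [MvPolynomial.algebraMap_eq]
    have h2 : T (MvPolynomial.C (MvPolynomial.coeff (Finsupp.single i 1) β) * MvPolynomial.X i)
        = MvPolynomial.C (MvPolynomial.coeff (Finsupp.single i 1) β) * T (MvPolynomial.X i) := by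
      rw [← MvPolynomial.smul_eq_C_mul, map_smul, MvPolynomial.smul_eq_C_mul]
    rw [h1, h2]
  have hφQ0 : φ Q = 0 := by
    rw [hQmem, map_add, map_mul, map_mul, hφhom1 α₂ hα₂h, hφhom1 α₁ hα₁h,
      hTzero α₂ (Submodule.subset_span (by simp)),
      hTzero α₁ (Submodule.subset_span (by simp))]
    ring
  have hφQ : φ Q = ∏ β ∈ ((A.erase α₁).erase α₂), T β := by
    rw [hQ, map_prod]
    apply Finset.prod_congr rfl
    intro β hβ
    exact hφhom1 β (hA1 β (Finset.mem_of_mem_erase (Finset.mem_of_mem_erase hβ))).2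
  have hprod0 : ∏ β ∈ ((A.erase α₁).erase α₂), T β = 0 := by rw [← hφQ, hφQ0]
  obtain ⟨β₀, hβ₀mem, hβ₀T⟩ := Finset.prod_eq_zero_iff.1 hprod0
  have hβ₀span : β₀ ∈ Submodule.span K ({α₁, α₂} : Set (S K ℓ)) := hTker β₀ hβ₀T
  rw [Finset.mem_erase, Finset.mem_erase] at hβ₀mem
  have hmain : ∃ β ∈ A, β ≠ α₁ ∧ β ≠ α₂ ∧ β ∈ Submodule.span K {α₁, α₂} :=
    ⟨β₀, hβ₀mem.2.2, hβ₀mem.2.1, hβ₀mem.1, hβ₀span⟩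
  refine ⟨?_, hmain⟩
  -- counting
  have hsub : ({α₁, α₂, β₀} : Set (S K ℓ)) ⊆
      {β ∈ (A : Set (S K ℓ)) | β ∈ Submodule.span K {α₁, α₂}} := by
    intro x hx
    rcases hx with rfl | rfl | rfl
    · exact ⟨h₁, Submodule.subset_span (by simp)⟩
    · exact ⟨h₂, Submodule.subset_span (by simp)⟩
    · exact ⟨hβ₀mem.2.2, hβ₀span⟩
  have hfin : ({β ∈ (A : Set (S K ℓ)) | β ∈ Submodule.span K {α₁, α₂}}).Finite :=
    A.finite_toSet.subset (Set.sep_subset _ _)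
  have h3 : ({α₁, α₂, β₀} : Set (S K ℓ)).ncard = 3 := by
    rw [Set.ncard_insert_of_notMem (by simp [hne, Ne.symm hβ₀mem.2.1]),
      Set.ncard_insert_of_notMem (by simp [Ne.symm hβ₀mem.1]),
      Set.ncard_singleton]
  have hle : 3 ≤ ({β ∈ (A : Set (S K ℓ)) | β ∈ Submodule.span K {α₁, α₂}}).ncard :=
    h3 ▸ Set.ncard_le_ncard hsub hfin
  exact lt_of_lt_of_le (by norm_num) hle

end ArrPaper
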